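/- Let 0 < δ < 1 and m ≥ 1, and let Θ be a finite nonempty set. Under the hypotheses of the population bound (context-awareness, context-preservation, balance, pairwise conditional independence, β := min_a Pr(Ã=a) > 0) and given an i.i.d. sample (C̃_i, D̃_i)_{i=1}^m from the human distribution with attributes Ã_i and predictions D̂′_i ~ P_θ(C̃_i), with probability at least 1 - δ, for all θ ∈ Θ: 2β · E[|h(D,A) - h(D̂,A)|] ≤ (1/m) Σ_{i=1}^m |h(D̃_i, Ã_i) - h(D̂′_i, Ã_i)| + sqrt((log|Θ| + log(2/δ)) / (2m)). -/

import Mathlib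

open MeasureTheory ProbabilityTheory

lemma hoeffding_key {p : ℝ} (hp0 : 0 ≤ p) (hp1 : p ≤ 1) (s : ℝ) :
    1 - p + p * Real.exp s ≤ Real.exp (p * s + s ^ 2 / 8) := by
  set G : ℝ → ℝ := fun x => 1 - p + p * Real.exp x with hGdef
  have hG : ∀ x, 0 < G x := by
    intro x
    rcases eq_or_lt_of_le hp0 with h | h
    · simp [hGdef, ← h]
    · have := Real.exp_pos x
      have : 0 < p * Real.exp x := by positivity
      simp only [hGdef]; linarith
  set F : ℝ → ℝ := fun x => p * x + x ^ 2 / 8 - Real.log (G x) with hFdef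
  set F' : ℝ → ℝ := fun x => p + x / 4 - p * Real.exp x / G x with hF'def
  have hGd : ∀ x, HasDerivAt G (p * Real.exp x) x := by
    intro x
    exact ((Real.hasDerivAt_exp x).const_mul p).const_add (1 - p)
  have hFd : ∀ x, HasDerivAt F (F' x) x := by
    intro x
    have h1 : HasDerivAt (fun y : ℝ => p * y) p x := by simpa using (hasDerivAt_id x).const_mul p
    have h2 : HasDerivAt (fun y : ℝ => y ^ 2 / 8) (x / 4) x := by
      have := (hasDerivAt_pow 2 x).div_const 8
      refine this.congr_deriv ?_; rw [show (2 - 1 : ℕ) = 1 from rfl]; push_cast; ring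
    have h3 : HasDerivAt (fun y => Real.log (G y)) (p * Real.exp x / G x) x :=
      (hGd x).log (hG x).ne'
    exact ((h1.add h2).sub h3)
  have hF'd : ∀ x, HasDerivAt F' (1 / 4 - p * Real.exp x * (1 - p) / (G x) ^ 2) x := by
    intro x
    have h1 : HasDerivAt (fun y : ℝ => p + y / 4) (1 / 4) x := by
      simpa using ((hasDerivAt_id x).div_const 4).const_add p
    have h2 : HasDerivAt (fun y => p * Real.exp y / G y)
        ((p * Real.exp x * G x - p * Real.exp x * (p * Real.exp x)) / (G x) ^ 2) x :=
      ((Real.hasDerivAt_exp x).const_mul p).div (hGd x) (hG x).ne'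
    have := h1.sub h2
    refine this.congr_deriv ?_
    have hGx := (hG x).ne'
    field_simp
    ring
  have hF'' : ∀ x, 0 ≤ 1 / 4 - p * Real.exp x * (1 - p) / (G x) ^ 2 := by
    intro x
    rw [sub_nonneg, div_le_iff₀ (pow_pos (hG x) 2)]
    have h := sq_nonneg (1 - p - p * Real.exp x)
    have : (G x) ^ 2 = (1 - p + p * Real.exp x) ^ 2 := rfl
    nlinarith [Real.exp_pos x]
  have hF'mono : Monotone F' := by
    have : ∀ x, 0 ≤ deriv F' x := fun x => (hF'd x).deriv ▸ hF'' x
    exact (monotone_of_deriv_nonneg (fun x => (hF'd x).differentiableAt) this)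
  have hF'0 : F' 0 = 0 := by
    simp [hF'def, hGdef]
  have hFderiv : deriv F = F' := funext fun x => (hFd x).deriv
  have hFdiff : Differentiable ℝ F := fun x => (hFd x).differentiableAt
  have hFcont : Continuous F := hFdiff.continuous
  have hF0 : F 0 = 0 := by simp [hFdef, hGdef]
  have hFnonneg : ∀ x, 0 ≤ F x := by
    intro x
    rcases le_total 0 x with hx | hx
    · have hmono : MonotoneOn F (Set.Ici 0) := by
        apply monotoneOn_of_deriv_nonneg (convex_Ici 0) hFcont.continuousOn
          (hFdiff.differentiableOn)
        intro y hy
        rw [hFderiv]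
        rw [interior_Ici] at hy
        have : F' 0 ≤ F' y := hF'mono (le_of_lt hy)
        linarith [hF'0 ▸ this]
      have := hmono (Set.self_mem_Ici) hx hx
      linarith [hF0 ▸ this]
    · have hanti : AntitoneOn F (Set.Iic 0) := by
        apply antitoneOn_of_deriv_nonpos (convex_Iic 0) hFcont.continuousOn
          (hFdiff.differentiableOn)
        intro y hy
        rw [hFderiv]
        rw [interior_Iic] at hy
        have : F' y ≤ F' 0 := hF'mono (le_of_lt hy)
        linarith [hF'0 ▸ this]
      have := hanti hx (Set.self_mem_Iic) hx
      linarith [hF0 ▸ this]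
  have hlog : Real.log (G s) ≤ p * s + s ^ 2 / 8 := by
    have := hFnonneg s
    simp only [hFdef] at this
    linarith
  have := (Real.log_le_iff_le_exp (hG s)).1 hlog
  simpa [hGdef] using this

lemma exp_convex_bound {y x : ℝ} (hy0 : 0 ≤ y) (hy1 : y ≤ 1) :
    Real.exp (x * y) ≤ 1 - y + y * Real.exp x := by
  have h := convexOn_exp.2 (Set.mem_univ (0:ℝ)) (Set.mem_univ x)
    (by linarith : (0:ℝ) ≤ 1 - y) hy0 (by ring)
  simp only [smul_eq_mul, mul_zero, zero_add, Real.exp_zero, mul_one] at h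
  calc Real.exp (x * y) = Real.exp (y * x) := by rw [mul_comm]
    _ ≤ 1 - y + y * Real.exp x := h

lemma mgf_centered_le {Ω : Type*} [MeasurableSpace Ω] (μ : Measure Ω) [IsProbabilityMeasure μ]
    {Y : Ω → ℝ} (hYm : Measurable Y) (hY0 : ∀ ω, 0 ≤ Y ω) (hY1 : ∀ ω, Y ω ≤ 1) (s : ℝ) :
    mgf (fun ω => (∫ ω, Y ω ∂μ) - Y ω) μ s ≤ Real.exp (s ^ 2 / 8) := by
  set p := ∫ ω, Y ω ∂μ with hp
  have hInt : Integrable Y μ := by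
    refine (integrable_const (1:ℝ)).mono' hYm.aestronglyMeasurable ?_
    filter_upwards with ω
    rw [Real.norm_eq_abs, abs_le]
    exact ⟨by linarith [hY0 ω], hY1 ω⟩
  have hp0 : 0 ≤ p := integral_nonneg hY0
  have hp1 : p ≤ 1 := by
    have := integral_mono hInt (integrable_const (1:ℝ)) hY1
    simpa using this
  have hIntR : Integrable (fun ω => Real.exp (s * p) * (1 - Y ω + Y ω * Real.exp (-s))) μ :=
    (((integrable_const (1:ℝ)).sub hInt).add (hInt.mul_const _)).const_mul _
  have hIntL : Integrable (fun ω => Real.exp (s * (p - Y ω))) μ := by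
    refine (integrable_const (Real.exp (|s| * (|p| + 1)))).mono'
      ((hYm.const_sub p).const_mul s).exp.aestronglyMeasurable ?_
    filter_upwards with ω
    rw [Real.norm_eq_abs, abs_of_pos (Real.exp_pos _), Real.exp_le_exp]
    have h1 : |p - Y ω| ≤ |p| + 1 := by
      have := abs_sub (p) (Y ω)
      have h2 : |Y ω| ≤ 1 := abs_le.2 ⟨by linarith [hY0 ω], hY1 ω⟩
      calc |p - Y ω| ≤ |p| + |Y ω| := abs_sub p (Y ω)
        _ ≤ |p| + 1 := by linarith
    calc s * (p - Y ω) ≤ |s * (p - Y ω)| := le_abs_self _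
      _ = |s| * |p - Y ω| := abs_mul _ _
      _ ≤ |s| * (|p| + 1) := by
          exact mul_le_mul_of_nonneg_left h1 (abs_nonneg s)
  calc mgf (fun ω => p - Y ω) μ s = ∫ ω, Real.exp (s * (p - Y ω)) ∂μ := rfl
    _ ≤ ∫ ω, Real.exp (s * p) * (1 - Y ω + Y ω * Real.exp (-s)) ∂μ := by
        refine integral_mono hIntL hIntR fun ω => ?_
        have : Real.exp (s * (p - Y ω)) = Real.exp (s * p) * Real.exp ((-s) * Y ω) := by
          rw [← Real.exp_add]; ring_nf
        rw [this]
        exact mul_le_mul_of_nonneg_left (exp_convex_bound (hY0 ω) (hY1 ω)) (Real.exp_pos _).le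
    _ = Real.exp (s * p) * (1 - p + p * Real.exp (-s)) := by
        rw [MeasureTheory.integral_const_mul]
        congr 1
        have hsub : Integrable (fun ω => 1 - Y ω) μ := (integrable_const (1:ℝ)).sub hInt
        rw [integral_add hsub (hInt.mul_const _), integral_sub (integrable_const (1:ℝ)) hInt,
          integral_const, MeasureTheory.integral_mul_const]
        simp [hp]
    _ ≤ Real.exp (s * p) * Real.exp (p * (-s) + (-s) ^ 2 / 8) :=
        mul_le_mul_of_nonneg_left (hoeffding_key hp0 hp1 (-s)) (Real.exp_pos _).le
    _ = Real.exp (s ^ 2 / 8) := by rw [← Real.exp_add]; ring_nf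

lemma bounded_integrable {Ω : Type*} [MeasurableSpace Ω] (μ : Measure Ω) [IsProbabilityMeasure μ]
    {Y : Ω → ℝ} (hYm : Measurable Y) (C : ℝ) (hC : ∀ ω, |Y ω| ≤ C) : Integrable Y μ := by
  refine (integrable_const C).mono' hYm.aestronglyMeasurable ?_
  filter_upwards with ω
  exact hC ω

lemma chernoff_sum {Ω : Type*} [MeasurableSpace Ω] (μ : Measure Ω) [IsProbabilityMeasure μ]
    (m : ℕ) (hm : 0 < m) (Y : Fin m → Ω → ℝ) (p : ℝ)
    (hYm : ∀ i, Measurable (Y i)) (hY0 : ∀ i ω, 0 ≤ Y i ω) (hY1 : ∀ i ω, Y i ω ≤ 1)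
    (hEq : ∀ i, ∫ ω, Y i ω ∂μ = p)
    (hind : iIndepFun (fun i => fun ω => p - Y i ω) μ)
    (t : ℝ) (ht : 0 ≤ t) :
    (μ {ω | (m : ℝ) * t ≤ ∑ i, (p - Y i ω)}).toReal ≤ Real.exp (-(2 * m * t ^ 2)) := by
  set Z : Fin m → Ω → ℝ := fun i ω => p - Y i ω with hZdef
  have hZm : ∀ i, Measurable (Z i) := fun i => (hYm i).const_sub p
  have hp0 : 0 ≤ p := (hEq ⟨0, hm⟩) ▸ integral_nonneg (hY0 _)
  have hp1 : p ≤ 1 := by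
    rw [← hEq ⟨0, hm⟩]
    have := integral_mono (bounded_integrable μ (hYm ⟨0, hm⟩) 1
      (fun ω => abs_le.2 ⟨by linarith [hY0 ⟨0, hm⟩ ω], hY1 _ ω⟩))
      (integrable_const (1:ℝ)) (hY1 ⟨0, hm⟩)
    simpa using this
  set s : ℝ := 4 * t with hsdef
  have hs : 0 ≤ s := by positivity
  have hZbdd : ∀ i ω, |Z i ω| ≤ 1 := fun i ω =>
    abs_le.2 ⟨by simp only [hZdef]; linarith [hY1 i ω], by simp only [hZdef]; linarith [hY0 i ω]⟩
  have hZint : ∀ i ∈ Finset.univ, Integrable (fun ω => Real.exp (s * Z i ω)) μ := by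
    intro i _
    refine bounded_integrable μ ((hZm i).const_mul s).exp (Real.exp s) fun ω => ?_
    rw [abs_of_pos (Real.exp_pos _), Real.exp_le_exp]
    nlinarith [hZbdd i ω, abs_le.1 (hZbdd i ω)]
  have hmgf_each : ∀ i, mgf (Z i) μ s ≤ Real.exp (s ^ 2 / 8) := by
    intro i
    have := mgf_centered_le μ (hYm i) (hY0 i) (hY1 i) s
    rwa [hEq i] at this
  have hmgf_sum : mgf (∑ i, Z i) μ s ≤ Real.exp (m * (s ^ 2 / 8)) := by
    rw [hind.mgf_sum hZm Finset.univ]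
    calc ∏ i, mgf (Z i) μ s ≤ ∏ _i : Fin m, Real.exp (s ^ 2 / 8) :=
          Finset.prod_le_prod (fun i _ => mgf_nonneg) (fun i _ => hmgf_each i)
      _ = Real.exp (m * (s ^ 2 / 8)) := by
          rw [Finset.prod_const, ← Real.exp_nat_mul]
          simp
  have hint_sum : Integrable (fun ω => Real.exp (s * (∑ i, Z i) ω)) μ :=
    hind.integrable_exp_mul_sum hZm hZint
  have hch := measure_ge_le_exp_mul_mgf (X := ∑ i, Z i) (μ := μ) ((m : ℝ) * t) hs hint_sum
  have hset : {ω | (m : ℝ) * t ≤ ∑ i, (p - Y i ω)} = {ω | (m : ℝ) * t ≤ (∑ i, Z i) ω} := by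
    ext ω; simp [Finset.sum_apply, hZdef]
  rw [hset]
  calc (μ {ω | (m : ℝ) * t ≤ (∑ i, Z i) ω}).toReal
      ≤ Real.exp (-s * ((m : ℝ) * t)) * mgf (∑ i, Z i) μ s := hch
    _ ≤ Real.exp (-s * ((m : ℝ) * t)) * Real.exp (m * (s ^ 2 / 8)) :=
        mul_le_mul_of_nonneg_left hmgf_sum (Real.exp_pos _).le
    _ = Real.exp (-(2 * m * t ^ 2)) := by
        rw [← Real.exp_add]; congr 1; simp only [hsdef]; ring

/-- pointwise change of measure -/
lemma eq_ptwise {𝒞 𝒟 : Type*} [Fintype 𝒞] [Fintype 𝒟]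
    (g : 𝒞 → 𝒟 → ℝ) (hg0 : ∀ c d, 0 ≤ g c d)
    (q : 𝒞 → 𝒟 → ℝ) (hq0 : ∀ c d, 0 ≤ q c d)
    (Ak : 𝒞 → Bool → ℝ) (hAk0 : ∀ c a, 0 ≤ Ak c a)
    (haware : ∀ c d, g c d / (∑ d', g c d') = q c d / (∑ d', q c d'))
    (hpres : ∀ c a,
      ((∑ d', g c d') * Ak c a) / (∑ c', (∑ d', g c' d') * Ak c' a)
        = ((∑ d', q c d') * Ak c a) / (∑ c', (∑ d', q c' d') * Ak c' a))
    (hbal : ∀ a, ∑ c, (∑ d', g c d') * Ak c a = 1 / 2)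
    (hβ : 0 < min (∑ c, (∑ d, q c d) * Ak c false) (∑ c, (∑ d, q c d) * Ak c true))
    (c : 𝒞) (d : 𝒟) (a : Bool) :
    2 * min (∑ c, (∑ d, q c d) * Ak c false) (∑ c, (∑ d, q c d) * Ak c true)
      * (g c d * Ak c a) ≤ q c d * Ak c a := by
  set β := min (∑ c, (∑ d, q c d) * Ak c false) (∑ c, (∑ d, q c d) * Ak c true) with hβdef
  set H : Bool → ℝ := fun a => ∑ c, (∑ d, q c d) * Ak c a with hHdef
  have hβH : ∀ a', β ≤ H a' := by
    intro a'; cases a'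
    · exact min_le_left _ _
    · exact min_le_right _ _
  have hHpos : ∀ a', 0 < H a' := fun a' => lt_of_lt_of_le hβ (hβH a')
  by_cases hzero : g c d * Ak c a = 0
  · rw [hzero, mul_zero]
    exact mul_nonneg (hq0 c d) (hAk0 c a)
  · obtain ⟨hg, hAk⟩ := mul_ne_zero_iff.1 hzero
    have hgpos : 0 < g c d := lt_of_le_of_ne (hg0 c d) (Ne.symm hg)
    have hAkpos : 0 < Ak c a := lt_of_le_of_ne (hAk0 c a) (Ne.symm hAk)
    have hgC : 0 < ∑ d', g c d' :=
      lt_of_lt_of_le hgpos (Finset.single_le_sum (fun d' _ => hg0 c d') (Finset.mem_univ d))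
    have hE := hpres c a
    rw [hbal a] at hE
    have hHa : H a = ∑ c', (∑ d', q c' d') * Ak c' a := by simp [hHdef]
    rw [← hHa] at hE
    have h2 : 2 * ((∑ d', g c d') * Ak c a) * H a = (∑ d', q c d') * Ak c a := by
      rw [eq_div_iff (hHpos a).ne'] at hE
      linear_combination hE
    have hqCAk : 0 < (∑ d', q c d') * Ak c a := by
      rw [← h2]
      have h4 : 0 < (∑ d', g c d') * Ak c a := mul_pos hgC hAkpos
      nlinarith [hHpos a]
    have hqC : 0 < ∑ d', q c d' := by
      by_contra hc
      push_neg at hc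
      nlinarith [mul_nonneg (neg_nonneg.2 hc) (hAk0 c a)]
    have hcross : g c d * (∑ d', q c d') = q c d * (∑ d', g c d') := by
      have hw := haware c d
      field_simp [hgC.ne', hqC.ne'] at hw
      linarith [hw]
    have key : 2 * (g c d * Ak c a) * H a * (∑ d', q c d')
        = q c d * Ak c a * (∑ d', q c d') := by
      linear_combination (2 * Ak c a * H a) * hcross + q c d * h2
    have h3 : 2 * (g c d * Ak c a) * H a = q c d * Ak c a :=
      mul_right_cancel₀ hqC.ne' key
    nlinarith [mul_nonneg (mul_pos hgpos hAkpos).le (sub_nonneg.2 (hβH a)), h3]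

/-- expectation of a function of a finitely-valued random variable -/
lemma discrete_exp {Ω α : Type*} [MeasurableSpace Ω] (μ : Measure Ω) [IsProbabilityMeasure μ]
    [Fintype α] [MeasurableSpace α] [MeasurableSingletonClass α]
    (X : Ω → α) (hX : Measurable X) (φ : α → ℝ) :
    ∫ ω, φ (X ω) ∂μ = ∑ x, (μ {ω | X ω = x}).toReal * φ x := by
  rw [← integral_map hX.aemeasurable (measurable_of_countable φ).aestronglyMeasurable]
  have : IsProbabilityMeasure (μ.map X) := Measure.isProbabilityMeasure_map hX.aemeasurable
  rw [integral_fintype (Integrable.of_finite)]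
  refine Finset.sum_congr rfl fun x _ => ?_
  rw [Measure.real, Measure.map_apply hX (measurableSet_singleton x), smul_eq_mul]
  have hpre : X ⁻¹' {x} = {ω | X ω = x} := by ext ω; simp
  rw [hpre]


def tdFn {𝒞 𝒟 : Type*} (h : 𝒟 → Bool → ℝ) (x : 𝒞 × 𝒟 × 𝒟 × Bool) : ℝ :=
  |h x.2.1 x.2.2.2 - h x.2.2.1 x.2.2.2|

/-- Theorem 2 of the paper (full learning bound). The equitable goal distribution is given
by a joint density `g` on contexts/dialogues together with the attribute kernel `Ak`; the
human distribution has joint density `q` with the same attribute kernel; predictions are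
drawn from the learned kernel `P θ` applied to the context. Under context-awareness,
context-preservation, balance of the goal, `β := min_a Pr(Ã=a) > 0`, and an i.i.d. sample
of size `m` from the human distribution (with predictions attached), with probability at
least `1 - δ`, for all `θ ∈ Θ`:
`2β·E[|h(D,A) - h(D̂,A)|] ≤ (1/m) Σᵢ |h(D̃ᵢ,Ãᵢ) - h(D̂′ᵢ,Ãᵢ)| + sqrt((log|Θ| + log(2/δ))/(2m))`. -/
theorem equitable_learning_bound
    {Ω Θ 𝒞 𝒟 : Type*} [MeasurableSpace Ω] (μ : Measure Ω) [IsProbabilityMeasure μ]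
    [Fintype Θ] [Nonempty Θ] [Fintype 𝒞] [Fintype 𝒟]
    [MeasurableSpace 𝒞] [MeasurableSingletonClass 𝒞]
    [MeasurableSpace 𝒟] [MeasurableSingletonClass 𝒟]
    (m : ℕ) (hm : 0 < m) (δ : ℝ) (hδ0 : 0 < δ) (hδ1 : δ < 1)
    -- goal joint density over context-dialogue pairs
    (g : 𝒞 → 𝒟 → ℝ) (hg0 : ∀ c d, 0 ≤ g c d) (hg1 : ∑ c, ∑ d, g c d = 1)
    -- human joint density over context-dialogue pairs
    (q : 𝒞 → 𝒟 → ℝ) (hq0 : ∀ c d, 0 ≤ q c d) (hq1 : ∑ c, ∑ d, q c d = 1)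
    -- shared attribute kernel
    (Ak : 𝒞 → Bool → ℝ) (hAk0 : ∀ c a, 0 ≤ Ak c a) (hAk1 : ∀ c, Ak c false + Ak c true = 1)
    -- learned dialogue kernel (the learned dialogue distribution P_θ(·))
    (P : Θ → 𝒞 → 𝒟 → ℝ) (hP0 : ∀ θ c d, 0 ≤ P θ c d) (hP1 : ∀ θ c, ∑ d, P θ c d = 1)
    -- test function
    (h : 𝒟 → Bool → ℝ) (h01 : ∀ d a, h d a ∈ Set.Icc (0 : ℝ) 1)
    -- (i) context-awareness
    (haware : ∀ c d, g c d / (∑ d', g c d') = q c d / (∑ d', q c d'))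
    -- (ii) context-preservation
    (hpres : ∀ c a,
      ((∑ d', g c d') * Ak c a) / (∑ c', (∑ d', g c' d') * Ak c' a)
        = ((∑ d', q c d') * Ak c a) / (∑ c', (∑ d', q c' d') * Ak c' a))
    -- (iii) balance of the goal
    (hbal : ∀ a, ∑ c, (∑ d', g c d') * Ak c a = 1 / 2)
    -- (iv) positivity of β := min_a Pr(Ã=a)
    (hβ : 0 < min (∑ c, (∑ d, q c d) * Ak c false) (∑ c, (∑ d, q c d) * Ak c true))
    -- i.i.d. human sample with attached attributes and predictions:
    -- `X θ i = (C̃ᵢ, D̃ᵢ, D̂′ᵢ, Ãᵢ)` where `D̂′ᵢ ∼ P θ (C̃ᵢ)`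
    (X : Θ → Fin m → Ω → 𝒞 × 𝒟 × 𝒟 × Bool)
    (hXmeas : ∀ θ i, Measurable (X θ i))
    (hlaw : ∀ θ i c d dh a,
      μ {ω | X θ i ω = (c, d, dh, a)} = ENNReal.ofReal (q c d * P θ c dh * Ak c a))
    (hiid : ∀ θ, iIndepFun (X θ) μ) :
    ENNReal.ofReal (1 - δ) ≤
      μ {ω | ∀ θ : Θ,
        2 * min (∑ c, (∑ d, q c d) * Ak c false) (∑ c, (∑ d, q c d) * Ak c true)
          * (∑ c, ∑ d, ∑ dh, ∑ a, g c d * P θ c dh * Ak c a * |h d a - h dh a|)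
        ≤ (1 / (m : ℝ)) * ∑ i,
            |h (X θ i ω).2.1 (X θ i ω).2.2.2 - h (X θ i ω).2.2.1 (X θ i ω).2.2.2|
          + Real.sqrt ((Real.log (Fintype.card Θ) + Real.log (2 / δ)) / (2 * m))} := by
  classical
  set K : ℝ := (Fintype.card Θ : ℝ) with hKdef
  set β : ℝ := min (∑ c, (∑ d, q c d) * Ak c false) (∑ c, (∑ d, q c d) * Ak c true) with hβdef
  set t : ℝ := Real.sqrt ((Real.log K + Real.log (2 / δ)) / (2 * (m : ℝ))) with htdef
  have hmpos : (0:ℝ) < m := by exact_mod_cast hm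
  have hK1 : 1 ≤ K := by rw [hKdef]; exact_mod_cast Fintype.card_pos
  have hKpos : (0:ℝ) < K := by linarith
  have hδ2 : (1:ℝ) ≤ 2 / δ := by rw [le_div_iff₀ hδ0]; linarith
  have hlogs : 0 ≤ Real.log K + Real.log (2 / δ) :=
    add_nonneg (Real.log_nonneg hK1) (Real.log_nonneg hδ2)
  have ht0 : 0 ≤ t := Real.sqrt_nonneg _
  have ht2 : t ^ 2 = (Real.log K + Real.log (2 / δ)) / (2 * (m : ℝ)) :=
    Real.sq_sqrt (by positivity)
  have habs0 : ∀ (x : 𝒞 × 𝒟 × 𝒟 × Bool), 0 ≤ tdFn h x := fun x => abs_nonneg _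
  have habs1 : ∀ (x : 𝒞 × 𝒟 × 𝒟 × Bool), tdFn h x ≤ 1 := by
    intro x
    have h1 := h01 x.2.1 x.2.2.2
    have h2 := h01 x.2.2.1 x.2.2.2
    simp only [Set.mem_Icc] at h1 h2
    exact abs_le.2 ⟨by linarith [h1.1, h2.2], by linarith [h1.2, h2.1]⟩
  set p : Θ → ℝ :=
    fun θ => ∑ c, ∑ d, ∑ dh, ∑ a, q c d * P θ c dh * Ak c a * |h d a - h dh a| with hpdef
  have hYmeas : ∀ θ i, Measurable (fun ω => tdFn h (X θ i ω)) :=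
    fun θ i => (measurable_of_countable (tdFn h)).comp (hXmeas θ i)
  have hEY : ∀ θ i, ∫ ω, tdFn h (X θ i ω) ∂μ = p θ := by
    intro θ i
    rw [discrete_exp μ (X θ i) (hXmeas θ i) (tdFn h)]
    simp only [hpdef, Fintype.sum_prod_type]
    refine Finset.sum_congr rfl fun c _ => Finset.sum_congr rfl fun d _ =>
      Finset.sum_congr rfl fun dh _ => Finset.sum_congr rfl fun a _ => ?_
    rw [hlaw θ i c d dh a, ENNReal.toReal_ofReal
      (mul_nonneg (mul_nonneg (hq0 c d) (hP0 θ c dh)) (hAk0 c a))]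
    rfl
  have hsum1 : ∀ θ, ∑ c, ∑ d, ∑ dh, ∑ a, q c d * P θ c dh * Ak c a = 1 := by
    intro θ
    have h1 : ∀ c d dh, ∑ a, q c d * P θ c dh * Ak c a = q c d * P θ c dh := by
      intro c d dh
      rw [Fintype.sum_bool, ← mul_add, add_comm (Ak c true), hAk1 c, mul_one]
    have h2 : ∀ c d, ∑ dh, q c d * P θ c dh = q c d := by
      intro c d; rw [← Finset.mul_sum, hP1, mul_one]
    calc ∑ c, ∑ d, ∑ dh, ∑ a, q c d * P θ c dh * Ak c a
        = ∑ c, ∑ d, ∑ dh, q c d * P θ c dh :=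
          Finset.sum_congr rfl fun c _ => Finset.sum_congr rfl fun d _ =>
            Finset.sum_congr rfl fun dh _ => h1 c d dh
      _ = ∑ c, ∑ d, q c d :=
          Finset.sum_congr rfl fun c _ => Finset.sum_congr rfl fun d _ => h2 c d
      _ = 1 := hq1
  have hcm : ∀ θ,
      2 * β * (∑ c, ∑ d, ∑ dh, ∑ a, g c d * P θ c dh * Ak c a * |h d a - h dh a|) ≤ p θ := by
    intro θ
    simp only [hpdef, Finset.mul_sum]
    refine Finset.sum_le_sum fun c _ => Finset.sum_le_sum fun d _ =>
      Finset.sum_le_sum fun dh _ => Finset.sum_le_sum fun a _ => ?_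
    have hpt := eq_ptwise g hg0 q hq0 Ak hAk0 haware hpres hbal hβ c d a
    have hmul := mul_le_mul_of_nonneg_right hpt
      (mul_nonneg (hP0 θ c dh) (abs_nonneg (h d a - h dh a)))
    nlinarith [hmul]
  have hiidZ : ∀ θ,
      iIndepFun (fun i => fun ω => p θ - tdFn h (X θ i ω)) μ := by
    intro θ
    exact (hiid θ).comp (fun i => fun x => p θ - tdFn h x) (fun i => measurable_of_countable _)
  have hbadθ : ∀ θ, μ {ω | (m : ℝ) * t ≤ ∑ i, (p θ - tdFn h (X θ i ω))}
      ≤ ENNReal.ofReal (δ / (2 * K)) := by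
    intro θ
    have hch := chernoff_sum μ m hm (fun i ω => tdFn h (X θ i ω)) (p θ)
      (hYmeas θ) (fun i ω => habs0 _) (fun i ω => habs1 _) (hEY θ) (hiidZ θ) t ht0
    have hexp : Real.exp (-(2 * (m : ℝ) * t ^ 2)) = δ / (2 * K) := by
      rw [ht2]
      have harg : -(2 * (m : ℝ) * ((Real.log K + Real.log (2 / δ)) / (2 * (m : ℝ))))
          = -Real.log K + -Real.log (2 / δ) := by
        field_simp
        ring
      rw [harg, Real.exp_add, Real.exp_neg, Real.exp_neg,
        Real.exp_log hKpos, Real.exp_log (by positivity : (0:ℝ) < 2 / δ)]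
      rw [inv_div]
      ring
    rw [← hexp]
    exact (ENNReal.le_ofReal_iff_toReal_le (measure_ne_top μ _) (Real.exp_pos _).le).2 hch
  set B : Θ → Set Ω := fun θ => {ω |
    (1 / (m : ℝ)) * ∑ i,
        |h (X θ i ω).2.1 (X θ i ω).2.2.2 - h (X θ i ω).2.2.1 (X θ i ω).2.2.2| + t
      < 2 * β * (∑ c, ∑ d, ∑ dh, ∑ a, g c d * P θ c dh * Ak c a * |h d a - h dh a|)}
    with hBdef
  have hBsub : ∀ θ, B θ ⊆ {ω | (m : ℝ) * t ≤ ∑ i, (p θ - tdFn h (X θ i ω))} := by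
    intro θ ω hω
    simp only [hBdef, Set.mem_setOf_eq] at hω ⊢
    have h2 : (1 / (m : ℝ)) * (∑ i, tdFn h (X θ i ω)) + t < p θ :=
      lt_of_lt_of_le hω (hcm θ)
    have hsum : ∑ i, (p θ - tdFn h (X θ i ω)) = m * p θ - ∑ i, tdFn h (X θ i ω) := by
      rw [Finset.sum_sub_distrib, Finset.sum_const, Finset.card_univ, Fintype.card_fin,
        nsmul_eq_mul]
    rw [hsum]
    have h3 := mul_lt_mul_of_pos_left h2 hmpos
    have h4 : (m : ℝ) * ((1 / (m : ℝ)) * (∑ i, tdFn h (X θ i ω)) + t)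
        = (∑ i, tdFn h (X θ i ω)) + (m : ℝ) * t := by
      field_simp
    rw [h4] at h3
    linarith
  have hBmeas : ∀ θ, MeasurableSet (B θ) := by
    intro θ
    have hf : Measurable (fun ω => (1 / (m : ℝ)) * ∑ i,
        |h (X θ i ω).2.1 (X θ i ω).2.2.2 - h (X θ i ω).2.2.1 (X θ i ω).2.2.2| + t) := by
      apply Measurable.add_const
      apply Measurable.const_mul
      exact Finset.measurable_sum _ (fun i _ => hYmeas θ i)
    exact measurableSet_lt hf measurable_const
  have hunion : μ (⋃ θ, B θ) ≤ ENNReal.ofReal δ := by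
    calc μ (⋃ θ, B θ) ≤ ∑' θ, μ (B θ) := measure_iUnion_le _
      _ ≤ ∑' _θ : Θ, ENNReal.ofReal (δ / (2 * K)) :=
          ENNReal.tsum_le_tsum (fun θ => le_trans (measure_mono (hBsub θ)) (hbadθ θ))
      _ = (Fintype.card Θ : ENNReal) * ENNReal.ofReal (δ / (2 * K)) := by
          rw [tsum_fintype, Finset.sum_const, Finset.card_univ, nsmul_eq_mul]
      _ ≤ ENNReal.ofReal δ := by
          rw [← ENNReal.ofReal_natCast, ← ENNReal.ofReal_mul (Nat.cast_nonneg _)]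
          apply ENNReal.ofReal_le_ofReal
          rw [← hKdef]
          have hKne : K ≠ 0 := hKpos.ne'
          have : K * (δ / (2 * K)) = δ / 2 := by
            field_simp
          rw [this]
          linarith
  have hgood : {ω | ∀ θ : Θ,
      2 * β * (∑ c, ∑ d, ∑ dh, ∑ a, g c d * P θ c dh * Ak c a * |h d a - h dh a|)
        ≤ (1 / (m : ℝ)) * ∑ i,
            |h (X θ i ω).2.1 (X θ i ω).2.2.2 - h (X θ i ω).2.2.1 (X θ i ω).2.2.2| + t}
      = (⋃ θ, B θ)ᶜ := by
    ext ω
    simp only [hBdef, Set.mem_setOf_eq, Set.mem_compl_iff, Set.mem_iUnion, not_exists, not_lt]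
  rw [hgood, measure_compl (MeasurableSet.iUnion hBmeas) (measure_ne_top μ _), measure_univ]
  calc ENNReal.ofReal (1 - δ) = 1 - ENNReal.ofReal δ := by
        rw [ENNReal.ofReal_sub 1 hδ0.le, ENNReal.ofReal_one]
    _ ≤ 1 - μ (⋃ θ, B θ) := tsub_le_tsub_left hunion 1
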